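/- Define σ : ℂ⁴ → ℂ⁴ by σ(a,b,c,d) = (a, b − 3d² − 3da² − a⁴, ωc, d + a²) where ω = e^{πi/k} for a fixed integer k ≥ 1. Let X = { (a,b,c,d) ∈ ℂ⁴ : a + a²b + c² + d³ = 0 } and q = (−1,−1,1,1). Then { m ∈ ℤ : σ^m(q) ∈ X } = kℤ, and the orbit of q under σ is infinite. -/

import Mathlib

/-- The Russell–Koras example: for the automorphism
`σ(a,b,c,d) = (a, b - 3d² - 3da² - a⁴, ωc, d + a²)` with `ω = e^{πi/k}`,
the hypersurface `X = {a + a²b + c² + d³ = 0}`, and `q = (-1,-1,1,1)`, the return set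
`{m ∈ ℤ : σ^m(q) ∈ X}` is exactly `kℤ`, and the orbit of `q` is infinite. -/
theorem stmt16 (k : ℕ) (hk : 1 ≤ k)
    (ω : ℂ) (hω : ω = Complex.exp (Real.pi * Complex.I / k))
    (σ : Equiv.Perm (ℂ × ℂ × ℂ × ℂ))
    (hσ : ∀ x : ℂ × ℂ × ℂ × ℂ, σ x =
      (x.1, x.2.1 - 3 * x.2.2.2 ^ 2 - 3 * x.2.2.2 * x.1 ^ 2 - x.1 ^ 4,
        ω * x.2.2.1, x.2.2.2 + x.1 ^ 2))
    (X : Set (ℂ × ℂ × ℂ × ℂ))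
    (hX : X = {x : ℂ × ℂ × ℂ × ℂ |
      x.1 + x.1 ^ 2 * x.2.1 + x.2.2.1 ^ 2 + x.2.2.2 ^ 3 = 0})
    (q : ℂ × ℂ × ℂ × ℂ) (hq : q = (-1, -1, 1, 1)) :
    {m : ℤ | (σ ^ m) q ∈ X} = {m : ℤ | (k : ℤ) ∣ m} ∧
    (Set.range fun m : ℤ => (σ ^ m) q).Infinite := by
  have hω0 : ω ≠ 0 := by rw [hω]; exact Complex.exp_ne_zero _
  have hstep : ∀ n : ℤ, σ (-1, -(1 + (n : ℂ)) ^ 3, ω ^ n, 1 + (n : ℂ)) =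
      (-1, -(1 + ((n + 1 : ℤ) : ℂ)) ^ 3, ω ^ (n + 1), 1 + ((n + 1 : ℤ) : ℂ)) := by
    intro n
    rw [hσ]
    refine Prod.ext rfl (Prod.ext ?_ (Prod.ext ?_ ?_)) <;> simp only
    · push_cast; ring
    · rw [zpow_add_one₀ hω0]; ring
    · push_cast; ring
  have key : ∀ n : ℤ, (σ ^ n) q = (-1, -(1 + (n : ℂ)) ^ 3, ω ^ n, 1 + (n : ℂ)) := by
    intro n
    induction n using Int.induction_on with
    | zero => norm_num [hq]
    | succ n ih =>
        have h1 : σ ^ ((n : ℤ) + 1) = σ * σ ^ (n : ℤ) := by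
          rw [add_comm, zpow_add, zpow_one]
        rw [h1, Equiv.Perm.mul_apply, ih]
        exact hstep (n : ℤ)
    | pred n ih =>
        have h2 : σ ((σ ^ (-(n : ℤ) - 1)) q) = (σ ^ (-(n : ℤ))) q := by
          conv_rhs => rw [show (-(n : ℤ)) = 1 + (-(n : ℤ) - 1) by ring, zpow_add, zpow_one,
            Equiv.Perm.mul_apply]
        have h3 := hstep (-(n : ℤ) - 1)
        rw [show (-(n : ℤ) - 1 + 1) = -(n : ℤ) by ring] at h3
        apply σ.injective
        rw [h2, ih, ← h3]
  have hkC : (k : ℂ) ≠ 0 := Nat.cast_ne_zero.mpr (by omega)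
  have hπ : (Real.pi : ℂ) ≠ 0 := by exact_mod_cast Real.pi_ne_zero
  have h2πI : (2 : ℂ) * Real.pi * Complex.I ≠ 0 := by simp [hπ, Complex.I_ne_zero]
  constructor
  · ext m
    simp only [Set.mem_setOf_eq, key m, hX]
    have hval : (-1 : ℂ) + (-1) ^ 2 * (-(1 + (m : ℂ)) ^ 3) + (ω ^ m) ^ 2 + (1 + (m : ℂ)) ^ 3
        = ω ^ (2 * m) - 1 := by
      rw [show (2 * m) = m + m by ring, zpow_add₀ hω0]
      ring
    rw [hval, sub_eq_zero]
    have hexp : ω ^ (2 * m) = Complex.exp ((2 * m : ℤ) * (Real.pi * Complex.I / k)) := by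
      rw [hω, ← Complex.exp_int_mul]
    rw [hexp, Complex.exp_eq_one_iff]
    constructor
    · rintro ⟨j, hj⟩
      refine ⟨j, ?_⟩
      field_simp at hj
      have h3 : (m : ℂ) * (2 * Real.pi * Complex.I)
          = ((j : ℂ) * k) * (2 * Real.pi * Complex.I) := by
          push_cast at hj; linear_combination (Real.pi * Complex.I) * hj
      have h4 : (m : ℂ) = (j : ℂ) * k := mul_right_cancel₀ h2πI h3
      have h5 : m = j * (k : ℤ) := by exact_mod_cast h4
      rw [h5, mul_comm]
    · rintro ⟨j, hj⟩
      refine ⟨j, ?_⟩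
      have hm : (m : ℂ) = (k : ℂ) * j := by exact_mod_cast congrArg (fun x : ℤ => (x : ℂ)) hj
      push_cast
      rw [hm]
      field_simp
  · apply Set.infinite_range_of_injective
    intro a b hab
    have h := congrArg (fun x : ℂ × ℂ × ℂ × ℂ => x.2.2.2) hab
    simp only [key] at h
    have h' : (a : ℂ) = b := by
      have := add_left_cancel h
      exact this
    exact_mod_cast h'
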